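/- Let f, g: ℤ → ℂ. The function u: ℤ × ℤ → ℂ defined by u(n, t) = (f(n−t) + f(n+t))/2 + sgn(t)·(g(n+|t|−1) + g(n+|t|−3) + ⋯ + g(n−|t|+1)) is the unique solution of the discrete wave equation u(n, t+1) + u(n, t−1) = u(n+1, t) + u(n−1, t) satisfying u(n, 0) = f(n) and (u(n, 1) − u(n, −1))/2 = g(n) for all n. -/
import Mathlib

private noncomputable def Apart (g : ℤ → ℂ) (n : ℤ) (m : ℕ) : ℂ :=
  ∑ j ∈ Finset.range m, g (n - m + 1 + 2 * (j : ℤ))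

private lemma Apart_succ_left (g : ℤ → ℂ) (n : ℤ) (m : ℕ) :
    Apart g n (m + 1) = Apart g (n + 1) m + g (n - m) := by
  unfold Apart
  rw [Finset.sum_range_succ']
  congr 1
  · apply Finset.sum_congr rfl; intro j _; congr 1; push_cast; ring
  · congr 1; push_cast; ring

private lemma Apart_key (g : ℤ → ℂ) (n : ℤ) (m : ℕ) :
    Apart g n (m + 2) + Apart g n m = Apart g (n + 1) (m + 1) + Apart g (n - 1) (m + 1) := by
  have h1 : Apart g n (m + 2) = Apart g (n + 1) (m + 1) + g (n - (m + 1)) :=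
    Apart_succ_left g n (m + 1)
  have h2 : Apart g (n - 1) (m + 1) = Apart g n m + g (n - 1 - m) := by
    have := Apart_succ_left g (n - 1) m
    rw [this]; congr 2; ring
  have harg : n - ((m : ℤ) + 1) = n - 1 - m := by ring
  rw [h1, h2, harg]; ring

private noncomputable def Ppart (g : ℤ → ℂ) (n t : ℤ) : ℂ :=
  (t.sign : ℂ) * ∑ j ∈ Finset.range t.natAbs, g (n - |t| + 1 + 2 * (j : ℤ))

private lemma Ppart_nat (g : ℤ → ℂ) (n : ℤ) (m : ℕ) : Ppart g n m = Apart g n m := by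
  cases m with
  | zero => simp [Ppart, Apart]
  | succ k =>
    have hs : ((k : ℤ) + 1).sign = 1 := Int.sign_eq_one_of_pos (by positivity)
    have ha : |((k : ℤ) + 1)| = (k : ℤ) + 1 := abs_of_nonneg (by positivity)
    simp [Ppart, Apart, hs, ha]
    rfl

private lemma Ppart_neg (g : ℤ → ℂ) (n : ℤ) (m : ℕ) : Ppart g n (-m) = -Apart g n m := by
  cases m with
  | zero => simp [Ppart, Apart]
  | succ k =>
    have hs : (-((k : ℤ) + 1)).sign = -1 := Int.sign_eq_neg_one_of_neg (by omega)
    have ha : |(-((k : ℤ) + 1))| = (k : ℤ) + 1 := by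
      rw [abs_neg]; exact abs_of_nonneg (by positivity)
    have hn : (-((k : ℤ) + 1)).natAbs = k + 1 := by omega
    simp only [Ppart, Apart]
    push_cast [hs, ha, hn]
    ring

private lemma Ppart_wave (g : ℤ → ℂ) (n t : ℤ) :
    Ppart g n (t + 1) + Ppart g n (t - 1) = Ppart g (n + 1) t + Ppart g (n - 1) t := by
  obtain ⟨m, rfl | rfl⟩ := Int.eq_nat_or_neg t
  · cases m with
    | zero =>
      have h1 : ((0 : ℕ) : ℤ) + 1 = ((1 : ℕ) : ℤ) := by norm_num
      have h2 : ((0 : ℕ) : ℤ) - 1 = -((1 : ℕ) : ℤ) := by norm_num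
      rw [h1, h2, Ppart_nat, Ppart_neg]
      simp [Ppart]
    | succ k =>
      have h1 : ((k + 1 : ℕ) : ℤ) + 1 = ((k + 2 : ℕ) : ℤ) := by push_cast; ring
      have h2 : ((k + 1 : ℕ) : ℤ) - 1 = ((k : ℕ) : ℤ) := by push_cast; ring
      rw [h1, h2, Ppart_nat, Ppart_nat, Ppart_nat, Ppart_nat]
      exact Apart_key g n k
  · cases m with
    | zero =>
      have h1 : -((0 : ℕ) : ℤ) + 1 = ((1 : ℕ) : ℤ) := by norm_num
      have h2 : -((0 : ℕ) : ℤ) - 1 = -((1 : ℕ) : ℤ) := by norm_num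
      rw [h1, h2, Ppart_nat, Ppart_neg]
      simp [Ppart]
    | succ k =>
      have h1 : -((k + 1 : ℕ) : ℤ) + 1 = -((k : ℕ) : ℤ) := by push_cast; ring
      have h2 : -((k + 1 : ℕ) : ℤ) - 1 = -((k + 2 : ℕ) : ℤ) := by push_cast; ring
      rw [h1, h2, Ppart_neg, Ppart_neg, Ppart_neg, Ppart_neg]
      have := Apart_key g n k
      linear_combination -this

/-- The discrete wave equation on `ℤ × ℤ`. -/
def DiscreteWave (u : ℤ → ℤ → ℂ) : Prop :=
  ∀ n t : ℤ, u n (t + 1) + u n (t - 1) = u (n + 1) t + u (n - 1) t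

/-- The function
`u(n, t) = (f(n−t) + f(n+t))/2 + sgn(t)·(g(n+|t|−1) + g(n+|t|−3) + ⋯ + g(n−|t|+1))`
is the unique solution of the discrete wave equation with `u(n, 0) = f(n)` and
`(u(n, 1) − u(n, −1))/2 = g(n)`. -/
theorem discrete_wave_unique_solution (f g : ℤ → ℂ) (u : ℤ → ℤ → ℂ)
    (hu : ∀ n t : ℤ, u n t =
      (f (n - t) + f (n + t)) / 2 +
        (t.sign : ℂ) * ∑ j ∈ Finset.range t.natAbs, g (n - |t| + 1 + 2 * (j : ℤ))) :
    DiscreteWave u ∧ (∀ n : ℤ, u n 0 = f n) ∧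
      (∀ n : ℤ, (u n 1 - u n (-1)) / 2 = g n) ∧
      (∀ v : ℤ → ℤ → ℂ, DiscreteWave v → (∀ n : ℤ, v n 0 = f n) →
        (∀ n : ℤ, (v n 1 - v n (-1)) / 2 = g n) → v = u) := by
  have hu' : ∀ n t : ℤ, u n t = (f (n - t) + f (n + t)) / 2 + Ppart g n t := hu
  have hwave : DiscreteWave u := by
    intro n t
    rw [hu' n (t + 1), hu' n (t - 1), hu' (n + 1) t, hu' (n - 1) t]
    have hp := Ppart_wave g n t
    have e1 : n - (t + 1) = n - 1 - t := by ring
    have e2 : n + (t + 1) = n + 1 + t := by ring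
    have e3 : n - (t - 1) = n + 1 - t := by ring
    have e4 : n + (t - 1) = n - 1 + t := by ring
    rw [e1, e2, e3, e4]
    linear_combination hp
  have hu0 : ∀ n : ℤ, u n 0 = f n := by
    intro n
    rw [hu' n 0]
    have : Ppart g n 0 = 0 := by simp [Ppart]
    rw [this]
    norm_num
  have hP1 : ∀ n : ℤ, Ppart g n 1 = g n := by
    intro n
    have := Ppart_nat g n 1
    rw [show ((1 : ℕ) : ℤ) = 1 by norm_num] at this
    rw [this]
    simp [Apart]
  have hPneg1 : ∀ n : ℤ, Ppart g n (-1) = -g n := by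
    intro n
    have := Ppart_neg g n 1
    rw [show ((1 : ℕ) : ℤ) = 1 by norm_num] at this
    rw [this]
    simp [Apart]
  have hug : ∀ n : ℤ, (u n 1 - u n (-1)) / 2 = g n := by
    intro n
    rw [hu' n 1, hu' n (-1), hP1 n, hPneg1 n]
    have e : n - -1 = n + 1 := by ring
    have e' : n + -1 = n - 1 := by ring
    rw [e, e']
    ring
  refine ⟨hwave, hu0, hug, ?_⟩
  intro v hv hv0 hvg
  set d : ℤ → ℤ → ℂ := fun n t => v n t - u n t with hd
  have hdwave : ∀ n t : ℤ, d n (t + 1) + d n (t - 1) = d (n + 1) t + d (n - 1) t := by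
    intro n t
    simp only [hd]
    have := hv n t
    have := hwave n t
    linear_combination hv n t - hwave n t
  have hd0 : ∀ n : ℤ, d n 0 = 0 := by
    intro n; simp only [hd]; rw [hv0 n, hu0 n]; ring
  have hd1 : ∀ n : ℤ, d n 1 = 0 ∧ d n (-1) = 0 := by
    intro n
    have h1 : d n 1 + d n (-1) = 0 := by
      have := hdwave n 0
      rw [show (0 : ℤ) + 1 = 1 by ring, show (0 : ℤ) - 1 = -1 by ring] at this
      rw [this, hd0, hd0]; ring
    have h2 : d n 1 - d n (-1) = 0 := by
      have hvu : (v n 1 - v n (-1)) / 2 = (u n 1 - u n (-1)) / 2 := by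
        rw [hvg n, hug n]
      simp only [hd]
      linear_combination 2 * hvu
    exact ⟨by linear_combination (h1 + h2) / 2, by linear_combination (h1 - h2) / 2⟩
  have hpos : ∀ m : ℕ, (∀ n : ℤ, d n m = 0) ∧ (∀ n : ℤ, d n (m + 1) = 0) := by
    intro m
    induction m with
    | zero => exact ⟨hd0, fun n => by simpa using (hd1 n).1⟩
    | succ k ih =>
      refine ⟨fun n => ?_, fun n => ?_⟩
      · have := ih.2 n; convert this using 2 <;> push_cast <;> ring
      · have hw := hdwave n ((k : ℤ) + 1)
        have e1 : (k : ℤ) + 1 + 1 = ((k + 1 : ℕ) : ℤ) + 1 := by push_cast; ring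
        have e2 : (k : ℤ) + 1 - 1 = (k : ℤ) := by ring
        rw [e1, e2] at hw
        have hv1 : d (n + 1) ((k : ℤ) + 1) = 0 := by
          have := ih.2 (n + 1); simpa using this
        have hv2 : d (n - 1) ((k : ℤ) + 1) = 0 := by
          have := ih.2 (n - 1); simpa using this
        have hv3 : d n (k : ℤ) = 0 := ih.1 n
        rw [hv3, hv1, hv2] at hw
        linear_combination hw
  have hneg : ∀ m : ℕ, (∀ n : ℤ, d n (-(m : ℤ)) = 0) ∧ (∀ n : ℤ, d n (-(m : ℤ) - 1) = 0) := by
    intro m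
    induction m with
    | zero =>
      refine ⟨fun n => by simpa using hd0 n, fun n => ?_⟩
      have := (hd1 n).2; convert this using 2 <;> ring
    | succ k ih =>
      refine ⟨fun n => ?_, fun n => ?_⟩
      · have := ih.2 n; convert this using 2 <;> push_cast <;> ring
      · have hw := hdwave n (-(k : ℤ) - 1)
        have e1 : -(k : ℤ) - 1 + 1 = -(k : ℤ) := by ring
        have e2 : -(k : ℤ) - 1 - 1 = -((k + 1 : ℕ) : ℤ) - 1 := by push_cast; ring
        rw [e1, e2] at hw
        have hv1 : d (n + 1) (-(k : ℤ) - 1) = 0 := ih.2 (n + 1)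
        have hv2 : d (n - 1) (-(k : ℤ) - 1) = 0 := ih.2 (n - 1)
        have hv3 : d n (-(k : ℤ)) = 0 := ih.1 n
        rw [hv3, hv1, hv2] at hw
        linear_combination hw
  funext n t
  have hdz : d n t = 0 := by
    obtain ⟨m, rfl | rfl⟩ := Int.eq_nat_or_neg t
    · exact (hpos m).1 n
    · exact (hneg m).1 n
  have hvu : v n t - u n t = 0 := hdz
  linear_combination hvu
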